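/- For R > 0, μ > 0, n ≥ 2, and every X ∈ ℝ², the 2×2 matrix S_n(X) := D²Φ_n(X) M(X), where M(X) is the matrix with rows ((1+R)X₁, R X₁) and (μR X₂, μR X₂), is symmetric, i.e. [S_n(X)]₁₂ = [S_n(X)]₂₁. -/

import Mathlib

open Matrix Finset

/-- `α_{k,n} = R (k + μ (n - k - 1))`. -/
noncomputable def alph (R mu : ℝ) (n k : ℕ) : ℝ := R * ((k : ℝ) + mu * ((n : ℝ) - (k : ℝ) - 1))

/-- `a_{j,n}`. -/
noncomputable def coefa (R mu : ℝ) (n j : ℕ) : ℝ :=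
  (n.choose j : ℝ) * ∏ k ∈ Finset.range j, ((k : ℝ) + alph R mu n k) / alph R mu n k

/-- `Φ_n(X) = Σ_{j=0}^n a_{j,n} X₁^j X₂^{n-j}`. -/
noncomputable def Phi (R mu : ℝ) (n : ℕ) (X : ℝ × ℝ) : ℝ :=
  ∑ j ∈ Finset.range (n + 1), coefa R mu n j * X.1 ^ j * X.2 ^ (n - j)

/-- first partial derivative of `Φ_n` in the first variable. -/
noncomputable def d1Phi (R mu : ℝ) (n : ℕ) (X : ℝ × ℝ) : ℝ :=
  deriv (fun t => Phi R mu n (t, X.2)) X.1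

/-- first partial derivative of `Φ_n` in the second variable. -/
noncomputable def d2Phi (R mu : ℝ) (n : ℕ) (X : ℝ × ℝ) : ℝ :=
  deriv (fun t => Phi R mu n (X.1, t)) X.2

/-- `∂₁²Φ_n`. -/
noncomputable def d11Phi (R mu : ℝ) (n : ℕ) (X : ℝ × ℝ) : ℝ :=
  deriv (fun t => d1Phi R mu n (t, X.2)) X.1

/-- `∂₁∂₂Φ_n`. -/
noncomputable def d12Phi (R mu : ℝ) (n : ℕ) (X : ℝ × ℝ) : ℝ :=
  deriv (fun t => d2Phi R mu n (t, X.2)) X.1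

/-- `∂₂²Φ_n`. -/
noncomputable def d22Phi (R mu : ℝ) (n : ℕ) (X : ℝ × ℝ) : ℝ :=
  deriv (fun t => d2Phi R mu n (X.1, t)) X.2

/-- The Hessian matrix `D²Φ_n(X)`. -/
noncomputable def hessPhi (R mu : ℝ) (n : ℕ) (X : ℝ × ℝ) : Matrix (Fin 2) (Fin 2) ℝ :=
  !![d11Phi R mu n X, d12Phi R mu n X; d12Phi R mu n X, d22Phi R mu n X]

/-- The mobility matrix `M(X)`. -/
noncomputable def mobM (R mu : ℝ) (X : ℝ × ℝ) : Matrix (Fin 2) (Fin 2) ℝ :=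
  !![(1 + R) * X.1, R * X.1; mu * R * X.2, mu * R * X.2]

/-- The quantity `A_{j,k}`. -/
noncomputable def Acoef (R mu : ℝ) (n j k : ℕ) : ℝ :=
  ((j : ℝ) + 2) * ((n : ℝ) - (k : ℝ)) * coefa R mu n (j + 2) * coefa R mu n k
    - ((n : ℝ) - (j : ℝ) - 1) * ((k : ℝ) + 1) * coefa R mu n (j + 1) * coefa R mu n (k + 1)

/-- `ν_n`. -/
noncomputable def nuc (R mu : ℝ) (n : ℕ) : ℝ :=
  Real.exp (((n : ℝ) - 1) * ((1 + R * max 1 mu) * Real.log (1 + 1 / (R * max 1 mu)) - 1)) - 1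

lemma d1Phi_eq (R mu : ℝ) (n : ℕ) (X : ℝ × ℝ) :
    d1Phi R mu n X =
      ∑ j ∈ Finset.range (n + 1),
        coefa R mu n j * ((j : ℝ) * X.1 ^ (j - 1)) * X.2 ^ (n - j) := by
  have h : HasDerivAt (fun t => Phi R mu n (t, X.2))
      (∑ j ∈ Finset.range (n + 1),
        coefa R mu n j * ((j : ℝ) * X.1 ^ (j - 1)) * X.2 ^ (n - j)) X.1 := by
    unfold Phi
    apply HasDerivAt.fun_sum
    intro j _
    exact ((hasDerivAt_pow j X.1).const_mul (coefa R mu n j)).mul_const (X.2 ^ (n - j))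
  exact h.deriv

lemma d2Phi_eq (R mu : ℝ) (n : ℕ) (X : ℝ × ℝ) :
    d2Phi R mu n X =
      ∑ j ∈ Finset.range (n + 1),
        coefa R mu n j * X.1 ^ j * (((n - j : ℕ) : ℝ) * X.2 ^ (n - j - 1)) := by
  have h : HasDerivAt (fun t => Phi R mu n (X.1, t))
      (∑ j ∈ Finset.range (n + 1),
        coefa R mu n j * X.1 ^ j * (((n - j : ℕ) : ℝ) * X.2 ^ (n - j - 1))) X.2 := by
    unfold Phi
    apply HasDerivAt.fun_sum
    intro j _
    exact (hasDerivAt_pow (n - j) X.2).const_mul (coefa R mu n j * X.1 ^ j)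
  exact h.deriv

lemma d11Phi_eq (R mu : ℝ) (n : ℕ) (X : ℝ × ℝ) :
    d11Phi R mu n X =
      ∑ j ∈ Finset.range (n + 1),
        coefa R mu n j * ((j : ℝ) * (((j - 1 : ℕ) : ℝ) * X.1 ^ (j - 1 - 1))) * X.2 ^ (n - j) := by
  have h : HasDerivAt (fun t => d1Phi R mu n (t, X.2))
      (∑ j ∈ Finset.range (n + 1),
        coefa R mu n j * ((j : ℝ) * (((j - 1 : ℕ) : ℝ) * X.1 ^ (j - 1 - 1))) * X.2 ^ (n - j)) X.1 := by
    have e : (fun t => d1Phi R mu n (t, X.2)) = fun t =>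
        ∑ j ∈ Finset.range (n + 1),
          coefa R mu n j * ((j : ℝ) * t ^ (j - 1)) * X.2 ^ (n - j) :=
      funext fun t => d1Phi_eq R mu n (t, X.2)
    rw [e]
    apply HasDerivAt.fun_sum
    intro j _
    exact (((hasDerivAt_pow (j - 1) X.1).const_mul (j : ℝ)).const_mul
      (coefa R mu n j)).mul_const (X.2 ^ (n - j))
  exact h.deriv

lemma d12Phi_eq (R mu : ℝ) (n : ℕ) (X : ℝ × ℝ) :
    d12Phi R mu n X =
      ∑ j ∈ Finset.range (n + 1),
        coefa R mu n j * ((j : ℝ) * X.1 ^ (j - 1)) * (((n - j : ℕ) : ℝ) * X.2 ^ (n - j - 1)) := by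
  have h : HasDerivAt (fun t => d2Phi R mu n (t, X.2))
      (∑ j ∈ Finset.range (n + 1),
        coefa R mu n j * ((j : ℝ) * X.1 ^ (j - 1)) * (((n - j : ℕ) : ℝ) * X.2 ^ (n - j - 1))) X.1 := by
    have e : (fun t => d2Phi R mu n (t, X.2)) = fun t =>
        ∑ j ∈ Finset.range (n + 1),
          coefa R mu n j * t ^ j * (((n - j : ℕ) : ℝ) * X.2 ^ (n - j - 1)) :=
      funext fun t => d2Phi_eq R mu n (t, X.2)
    rw [e]
    apply HasDerivAt.fun_sum
    intro j _
    exact ((hasDerivAt_pow j X.1).const_mul (coefa R mu n j)).mul_const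
      (((n - j : ℕ) : ℝ) * X.2 ^ (n - j - 1))
  exact h.deriv

lemma d22Phi_eq (R mu : ℝ) (n : ℕ) (X : ℝ × ℝ) :
    d22Phi R mu n X =
      ∑ j ∈ Finset.range (n + 1),
        coefa R mu n j * X.1 ^ j *
          (((n - j : ℕ) : ℝ) * (((n - j - 1 : ℕ) : ℝ) * X.2 ^ (n - j - 1 - 1))) := by
  have h : HasDerivAt (fun t => d2Phi R mu n (X.1, t))
      (∑ j ∈ Finset.range (n + 1),
        coefa R mu n j * X.1 ^ j *
          (((n - j : ℕ) : ℝ) * (((n - j - 1 : ℕ) : ℝ) * X.2 ^ (n - j - 1 - 1)))) X.2 := by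
    have e : (fun t => d2Phi R mu n (X.1, t)) = fun t =>
        ∑ j ∈ Finset.range (n + 1),
          coefa R mu n j * X.1 ^ j * (((n - j : ℕ) : ℝ) * t ^ (n - j - 1)) :=
      funext fun t => d2Phi_eq R mu n (X.1, t)
    rw [e]
    apply HasDerivAt.fun_sum
    intro j _
    exact (((hasDerivAt_pow (n - j - 1) X.2).const_mul ((n - j : ℕ) : ℝ)).const_mul
      (coefa R mu n j * X.1 ^ j))
  exact h.deriv

lemma alph_pos (R mu : ℝ) (hR : 0 < R) (hmu : 0 < mu) (n : ℕ) (hn : 2 ≤ n)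
    (k : ℕ) (hk : k < n) : 0 < alph R mu n k := by
  unfold alph
  apply mul_pos hR
  rcases Nat.eq_zero_or_pos k with h | h
  · subst h
    have : (2 : ℝ) ≤ (n : ℝ) := by exact_mod_cast hn
    push_cast
    nlinarith
  · have h1 : (1 : ℝ) ≤ (k : ℝ) := by exact_mod_cast h
    have h2 : (k : ℝ) + 1 ≤ (n : ℝ) := by exact_mod_cast hk
    nlinarith

lemma key (R mu : ℝ) (hR : 0 < R) (hmu : 0 < mu) (n : ℕ) (hn : 2 ≤ n)
    (k : ℕ) (hk : k < n) :
    ((k : ℝ) + 1) * (R * ((k : ℝ) + mu * ((n : ℝ) - (k : ℝ) - 1))) * coefa R mu n (k + 1)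
      = ((n : ℝ) - (k : ℝ)) * ((k : ℝ) + R * ((k : ℝ) + mu * ((n : ℝ) - (k : ℝ) - 1)))
          * coefa R mu n k := by
  have ha : alph R mu n k ≠ 0 := ne_of_gt (alph_pos R mu hR hmu n hn k hk)
  have hchoose : ((n.choose (k + 1) : ℕ) : ℝ) * ((k : ℝ) + 1)
      = (n.choose k : ℝ) * ((n : ℝ) - (k : ℝ)) := by
    have h2 : ((n.choose (k + 1) * (k + 1) : ℕ) : ℝ) = ((n.choose k * (n - k) : ℕ) : ℝ) := by
      exact_mod_cast congrArg (Nat.cast (R := ℝ)) (Nat.choose_succ_right_eq n k)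
    push_cast [Nat.cast_sub (le_of_lt hk)] at h2
    linarith [h2]
  have hα : R * ((k : ℝ) + mu * ((n : ℝ) - (k : ℝ) - 1)) = alph R mu n k := rfl
  rw [hα]
  unfold coefa
  rw [Finset.prod_range_succ]
  have h2 : ((k : ℝ) + alph R mu n k) / alph R mu n k * alph R mu n k
      = (k : ℝ) + alph R mu n k := div_mul_cancel₀ _ ha
  set P := ∏ x ∈ Finset.range k, ((x : ℝ) + alph R mu n x) / alph R mu n x with hP
  set Q := ((k : ℝ) + alph R mu n k) / alph R mu n k with hQ
  linear_combination (P * Q * alph R mu n k) * hchoose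
    + ((n.choose k : ℝ) * ((n : ℝ) - (k : ℝ)) * P) * h2

lemma scalar_id (R mu : ℝ) (hR : 0 < R) (hmu : 0 < mu) (n : ℕ) (hn : 2 ≤ n) (X : ℝ × ℝ) :
    d11Phi R mu n X * (R * X.1) + d12Phi R mu n X * (mu * R * X.2)
      = d12Phi R mu n X * ((1 + R) * X.1) + d22Phi R mu n X * (mu * R * X.2) := by
  rw [d11Phi_eq, d12Phi_eq, d22Phi_eq]
  rw [Finset.sum_mul, Finset.sum_mul, Finset.sum_mul, Finset.sum_mul,
    ← Finset.sum_add_distrib, ← Finset.sum_add_distrib]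
  rw [Finset.sum_range_succ' _ n, Finset.sum_range_succ]
  have h0 : (coefa R mu n 0 * ((0 : ℕ) * (((0 - 1 : ℕ) : ℝ) * X.1 ^ (0 - 1 - 1))) * X.2 ^ (n - 0)
      * (R * X.1)
      + coefa R mu n 0 * (((0 : ℕ) : ℝ) * X.1 ^ (0 - 1)) * (((n - 0 : ℕ) : ℝ) * X.2 ^ (n - 0 - 1))
      * (mu * R * X.2)) = 0 := by norm_num
  have hn0 : (coefa R mu n n * (((n : ℕ) : ℝ) * X.1 ^ (n - 1)) * (((n - n : ℕ) : ℝ) * X.2 ^ (n - n - 1))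
      * ((1 + R) * X.1)
      + coefa R mu n n * X.1 ^ n *
        (((n - n : ℕ) : ℝ) * (((n - n - 1 : ℕ) : ℝ) * X.2 ^ (n - n - 1 - 1))) * (mu * R * X.2)) = 0 := by
    simp [Nat.sub_self]
  rw [h0, hn0, add_zero, add_zero]
  apply Finset.sum_congr rfl
  intro j hj
  rw [Finset.mem_range] at hj
  obtain ⟨p, hp⟩ : ∃ p, n = j + 1 + p := ⟨n - (j + 1), by omega⟩
  subst hp
  have K := key R mu hR hmu (j + 1 + p) (by omega) j (by omega)
  set A := coefa R mu (j + 1 + p) (j + 1) with hA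
  set B := coefa R mu (j + 1 + p) j with hB
  have e1 : j + 1 + p - (j + 1) = p := by omega
  have e2 : j + 1 + p - j = p + 1 := by omega
  rw [e1, e2]
  simp only [Nat.add_sub_cancel]
  rcases Nat.eq_zero_or_pos j with hj0 | hj0
  · subst hj0
    obtain ⟨m, rfl⟩ : ∃ m, p = m + 1 := ⟨p - 1, by omega⟩
    simp only [Nat.add_sub_cancel]
    push_cast
    push_cast at K
    linear_combination (X.2 * X.2 ^ m) * K
  · obtain ⟨i, rfl⟩ : ∃ i, j = i + 1 := ⟨j - 1, by omega⟩
    rcases Nat.eq_zero_or_pos p with hp0 | hp0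
    · subst hp0
      simp only [Nat.add_sub_cancel]
      push_cast
      push_cast at K
      linear_combination (X.1 * X.1 ^ i) * K
    · obtain ⟨m, rfl⟩ : ∃ m, p = m + 1 := ⟨p - 1, by omega⟩
      simp only [Nat.add_sub_cancel]
      push_cast
      push_cast at K
      linear_combination (X.1 * X.1 ^ i * X.2 * X.2 ^ m) * K

theorem stmt9 (R mu : ℝ) (hR : 0 < R) (hmu : 0 < mu) (n : ℕ) (hn : 2 ≤ n)
    (X : ℝ × ℝ) :
    (hessPhi R mu n X * mobM R mu X) 0 1 = (hessPhi R mu n X * mobM R mu X) 1 0 := by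
  have h01 : (hessPhi R mu n X * mobM R mu X) 0 1
      = d11Phi R mu n X * (R * X.1) + d12Phi R mu n X * (mu * R * X.2) := by
    simp [hessPhi, mobM, Matrix.mul_apply, Fin.sum_univ_two]
  have h10 : (hessPhi R mu n X * mobM R mu X) 1 0
      = d12Phi R mu n X * ((1 + R) * X.1) + d22Phi R mu n X * (mu * R * X.2) := by
    simp [hessPhi, mobM, Matrix.mul_apply, Fin.sum_univ_two]
  rw [h01, h10]
  exact scalar_id R mu hR hmu n hn X
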